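/- (Recovery sequence / Mosco limsup inequality.) For every φ ∈ L²(Q) and every sequence (α_n) ⊂ (0,1) with α_n → 0, the constant sequence φ_n := φ satisfies limsup_{n→∞} E_{sg,α_n}(φ) ≤ I_K(φ) in [0,∞]. Consequently, for every φ ∈ L²(Q) there exists a sequence converging strongly to φ in L²(Q) along which the limsup of E_{sg,α_n} is at most I_K(φ). -/

import Mathlib

open MeasureTheory Filter Set Classical
open scoped ENNReal

/-- The logarithmic potential `W_{sg,α}(s) = α((1+α+s)log(1+α+s) + (1+α−s)log(1+α−s))`.
(In Mathlib, `Real.log 0 = 0`, so the convention `0·log 0 = 0` holds automatically.) -/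
noncomputable def Wsg (α s : ℝ) : ℝ :=
  α * ((1 + α + s) * Real.log (1 + α + s) + (1 + α - s) * Real.log (1 + α - s))

/-- The Lebesgue measure restricted to `Q = Ω × (0,T')`. -/
noncomputable def Qmeasure (Ω : Set (EuclideanSpace ℝ (Fin 3))) (T' : ℝ) :
    Measure (EuclideanSpace ℝ (Fin 3) × ℝ) :=
  volume.restrict (Ω ×ˢ Set.Ioo 0 T')

/-- The functional `E_{sg,α} : L²(Q) → [0,∞]`, equal to `∫_Q W_{sg,α}(φ)` if
`|φ| ≤ 1+α` a.e. in `Q`, and `+∞` otherwise. -/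
noncomputable def Esg {X : Type*} [MeasurableSpace X] (μ : Measure X) (α : ℝ)
    (φ : X → ℝ) : ℝ≥0∞ :=
  if ∀ᵐ x ∂μ, |φ x| ≤ 1 + α then ∫⁻ x, ENNReal.ofReal (Wsg α (φ x)) ∂μ else ⊤

/-- The indicator functional `I_K` of `K = {φ ∈ L²(Q) : |φ| ≤ 1 a.e.}`. -/
noncomputable def IK {X : Type*} [MeasurableSpace X] (μ : Measure X)
    (φ : X → ℝ) : ℝ≥0∞ :=
  if ∀ᵐ x ∂μ, |φ x| ≤ 1 then 0 else ⊤

lemma xlogx_le (x : ℝ) (hx0 : 0 ≤ x) (hx3 : x ≤ 3) : x * Real.log x ≤ 6 := by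
  rcases le_or_gt x 1 with h | h
  · have : Real.log x ≤ 0 := Real.log_nonpos hx0 h
    nlinarith
  · have hl : Real.log x ≤ x - 1 := Real.log_le_sub_one_of_pos (by linarith)
    nlinarith [Real.log_nonneg h.le]

lemma Wsg_le (a s : ℝ) (ha0 : 0 < a) (ha1 : a < 1) (hs : |s| ≤ 1) :
    Wsg a s ≤ 12 * a := by
  rw [abs_le] at hs
  have h1 : (1 + a + s) * Real.log (1 + a + s) ≤ 6 :=
    xlogx_le _ (by linarith [hs.1]) (by linarith [hs.2])
  have h2 : (1 + a - s) * Real.log (1 + a - s) ≤ 6 :=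
    xlogx_le _ (by linarith [hs.2]) (by linarith [hs.1])
  unfold Wsg
  nlinarith

/-- **Recovery sequence / Mosco limsup inequality.** For every
`φ ∈ L²(Q)` and `α_n ∈ (0,1)` with `α_n → 0`, the constant sequence `φ_n = φ`
satisfies `limsup_n E_{sg,α_n}(φ) ≤ I_K(φ)`; consequently there is a sequence
converging strongly to `φ` in `L²(Q)` along which the limsup of `E_{sg,α_n}` is
at most `I_K(φ)`. -/
theorem stmt_3
    (T' : ℝ) (hT' : 0 < T')
    (Ω : Set (EuclideanSpace ℝ (Fin 3)))
    (hΩo : IsOpen Ω) (hΩc : IsConnected Ω) (hΩb : Bornology.IsBounded Ω)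
    (α : ℕ → ℝ) (hα : ∀ n, α n ∈ Set.Ioo (0 : ℝ) 1)
    (hα0 : Tendsto α atTop (nhds 0))
    (φ : EuclideanSpace ℝ (Fin 3) × ℝ → ℝ)
    (hφ : MemLp φ 2 (Qmeasure Ω T')) :
    atTop.limsup (fun n => Esg (Qmeasure Ω T') (α n) φ) ≤ IK (Qmeasure Ω T') φ ∧
    ∃ φn : ℕ → EuclideanSpace ℝ (Fin 3) × ℝ → ℝ,
      (∀ n, MemLp (φn n) 2 (Qmeasure Ω T')) ∧
      Tendsto (fun n => eLpNorm (fun x => φn n x - φ x) 2 (Qmeasure Ω T')) atTop (nhds 0) ∧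
      atTop.limsup (fun n => Esg (Qmeasure Ω T') (α n) (φn n)) ≤ IK (Qmeasure Ω T') φ := by
  set μ := Qmeasure Ω T' with hμdef
  have key : atTop.limsup (fun n => Esg μ (α n) φ) ≤ IK μ φ := by
    unfold IK
    split_ifs with h
    · have hμfin : μ Set.univ < ⊤ := by
        rw [hμdef]
        unfold Qmeasure
        rw [Measure.restrict_apply_univ]
        exact (hΩb.prod (Metric.isBounded_Ioo 0 T')).measure_lt_top
      have hbound : ∀ n, Esg μ (α n) φ ≤ ENNReal.ofReal (12 * α n) * μ Set.univ := by
        intro n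
        obtain ⟨hn0, hn1⟩ := hα n
        have hE : Esg μ (α n) φ = ∫⁻ x, ENNReal.ofReal (Wsg (α n) (φ x)) ∂μ := by
          unfold Esg
          rw [if_pos]
          filter_upwards [h] with x hx
          linarith
        rw [hE]
        calc ∫⁻ x, ENNReal.ofReal (Wsg (α n) (φ x)) ∂μ
            ≤ ∫⁻ _, ENNReal.ofReal (12 * α n) ∂μ := by
              apply lintegral_mono_ae
              filter_upwards [h] with x hx
              exact ENNReal.ofReal_le_ofReal (Wsg_le _ _ hn0 hn1 hx)
          _ = ENNReal.ofReal (12 * α n) * μ Set.univ := lintegral_const _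
      have ht : Tendsto (fun n => ENNReal.ofReal (12 * α n) * μ Set.univ) atTop (nhds 0) := by
        have h1 : Tendsto (fun n => (12 : ℝ) * α n) atTop (nhds 0) := by
          simpa using hα0.const_mul (12 : ℝ)
        have h2 : Tendsto (fun n => ENNReal.ofReal (12 * α n)) atTop (nhds 0) := by
          simpa using ENNReal.tendsto_ofReal h1
        simpa using ENNReal.Tendsto.mul_const h2 (Or.inr hμfin.ne)
      calc atTop.limsup (fun n => Esg μ (α n) φ)
          ≤ atTop.limsup (fun n => ENNReal.ofReal (12 * α n) * μ Set.univ) :=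
            limsup_le_limsup (Eventually.of_forall hbound)
        _ = 0 := ht.limsup_eq
    · exact le_top
  refine ⟨key, fun _ => φ, fun _ => hφ, ?_, key⟩
  simp [eLpNorm_zero]
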